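/- (Correctness of the MM algorithm for the checking query Q1.) Assume binary labels 𝒴 = {l, l'} with l ≠ l', 1 ≤ K ≤ N with K odd, and all N·M similarity values s_{i,j} pairwise distinct. Then every possible world has K-NN prediction l if and only if the K-NN prediction of the l'-extreme world E_{l'} is l (equivalently, E_{l'} does not predict l'). -/

import Mathlib

open Finset

/-- The top-`K` set of a possible world `w`: the set of indices `i` such that at most `K`
indices `i'` have similarity `s i' (w i')` at least `s i (w i)`. Under the assumption that
all similarities are pairwise distinct, this is the set of the `K` indices with the largest
similarities. -/
noncomputable def topK {N M : ℕ} (s : Fin N → Fin M → ℝ) (K : ℕ) (w : Fin N → Fin M) :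
    Finset (Fin N) :=
  Finset.univ.filter fun i =>
    (Finset.univ.filter fun i' => s i (w i) ≤ s i' (w i')).card ≤ K

/-- For binary labels and odd `K`, the K-NN prediction of `w` is `c` iff `c` is the strict
majority label among the top-`K` set of `w`. -/
def predicts {N M : ℕ} {Y : Type*} [DecidableEq Y]
    (s : Fin N → Fin M → ℝ) (K : ℕ) (y : Fin N → Y) (w : Fin N → Fin M) (c : Y) : Prop :=
  K < 2 * ((topK s K w).filter fun i => y i = c).card

/-- `e` is the `c`-extreme world: for each `i`, `e i` is the candidate most similar to
the test point if `y i = c`, and the candidate least similar to the test point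
otherwise. -/
def IsExtremeWorld {N M : ℕ} {Y : Type*} (s : Fin N → Fin M → ℝ) (y : Fin N → Y) (c : Y)
    (e : Fin N → Fin M) : Prop :=
  ∀ i : Fin N,
    (y i = c → ∀ j : Fin M, s i j ≤ s i (e i)) ∧ (y i ≠ c → ∀ j : Fin M, s i (e i) ≤ s i j)

namespace Stmt10Aux

variable {N M : ℕ} (s : Fin N → Fin M → ℝ) (w : Fin N → Fin M)

/-- rank of `i` in world `w` -/
noncomputable def rnk (i : Fin N) : ℕ :=
  (Finset.univ.filter fun i' => s i (w i) ≤ s i' (w i')).card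

lemma mem_topK {K : ℕ} {i : Fin N} : i ∈ topK s K w ↔ rnk s w i ≤ K := by
  simp [topK, rnk]

variable {s w}

lemma g_inj (hs : Function.Injective fun p : Fin N × Fin M => s p.1 p.2) : Function.Injective fun i : Fin N => s i (w i) := by
  intro a b h
  have h2 : (fun p : Fin N × Fin M => s p.1 p.2) (a, w a)
      = (fun p : Fin N × Fin M => s p.1 p.2) (b, w b) := h
  exact congrArg Prod.fst (hs h2)

lemma rnk_le {i j : Fin N} (h : s i (w i) ≤ s j (w j)) : rnk s w j ≤ rnk s w i := by
  apply Finset.card_le_card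
  intro x hx
  simp only [mem_filter, mem_univ, true_and] at hx ⊢
  exact le_trans h hx

lemma rnk_lt {i j : Fin N} (h : s i (w i) < s j (w j)) : rnk s w j < rnk s w i := by
  apply Finset.card_lt_card
  constructor
  · intro x hx
    simp only [mem_filter, mem_univ, true_and] at hx ⊢
    exact le_trans h.le hx
  · intro hsub
    have hi : i ∈ Finset.univ.filter fun i' => s i (w i) ≤ s i' (w i') := by
      simp
    have := hsub hi
    simp only [mem_filter, mem_univ, true_and] at this
    exact absurd this (not_le.2 h)

lemma rnk_inj (hs : Function.Injective fun p : Fin N × Fin M => s p.1 p.2) : Function.Injective (rnk s w) := by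
  intro a b h
  by_contra hab
  rcases lt_trichotomy (s a (w a)) (s b (w b)) with h1 | h1 | h1
  · exact absurd h (ne_of_gt (rnk_lt h1))
  · exact hab (g_inj hs h1)
  · exact absurd h.symm (ne_of_gt (rnk_lt h1))

lemma one_le_rnk (i : Fin N) : 1 ≤ rnk s w i := by
  have : i ∈ Finset.univ.filter fun i' => s i (w i) ≤ s i' (w i') := by simp
  exact Finset.card_pos.2 ⟨i, this⟩

lemma rnk_le_N (i : Fin N) : rnk s w i ≤ N := by
  simpa [rnk] using Finset.card_le_card (Finset.filter_subset _ (univ : Finset (Fin N)))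

lemma image_rnk (hs : Function.Injective fun p : Fin N × Fin M => s p.1 p.2) : Finset.image (rnk s w) Finset.univ = Finset.Icc 1 N := by
  apply Finset.eq_of_subset_of_card_le
  · intro x hx
    simp only [mem_image, mem_univ, true_and] at hx
    obtain ⟨i, rfl⟩ := hx
    exact Finset.mem_Icc.2 ⟨one_le_rnk i, rnk_le_N i⟩
  · rw [Nat.card_Icc, Finset.card_image_of_injective _ (rnk_inj hs)]
    simp

lemma card_topK (hs : Function.Injective fun p : Fin N × Fin M => s p.1 p.2) {K : ℕ} (hKN : K ≤ N) : (topK s K w).card = K := by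
  have h1 : topK s K w = Finset.univ.filter fun i => rnk s w i ≤ K := by
    ext i; simp [mem_topK]
  have h2 : (Finset.univ.filter fun i => rnk s w i ≤ K).image (rnk s w)
      = (Finset.univ.image (rnk s w)).filter fun n => n ≤ K := by
    ext n
    simp only [mem_image, mem_filter, mem_univ, true_and]
    constructor
    · rintro ⟨i, hi, rfl⟩; exact ⟨⟨i, rfl⟩, hi⟩
    · rintro ⟨⟨i, rfl⟩, hn⟩; exact ⟨i, hn, rfl⟩
  rw [h1, ← Finset.card_image_of_injective _ (rnk_inj hs), h2, image_rnk hs]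
  have : (Finset.Icc 1 N).filter (fun n => n ≤ K) = Finset.Icc 1 K := by
    ext n; simp only [mem_filter, Finset.mem_Icc]; omega
  rw [this, Nat.card_Icc]
  omega

lemma topK_up {K : ℕ} {i j : Fin N} (hi : i ∈ topK s K w)
    (h : s i (w i) ≤ s j (w j)) : j ∈ topK s K w := by
  rw [mem_topK] at hi ⊢
  exact le_trans (rnk_le h) hi

lemma topK_lt {K : ℕ} {i j : Fin N} (hi : i ∈ topK s K w)
    (hj : j ∉ topK s K w) : s j (w j) < s i (w i) := by
  by_contra h
  exact hj (topK_up hi (not_lt.1 h))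

end Stmt10Aux

open Stmt10Aux

/-- **correctness of the MM algorithm for Q1.** For a two-element label set
`𝒴 = {l, l'}`, `1 ≤ K ≤ N` odd, and pairwise distinct similarities: every possible world
has K-NN prediction `l` iff the K-NN prediction of the `l'`-extreme world `E_{l'}` is
`l`. -/
theorem stmt10 (N M K : ℕ) (hK1 : 1 ≤ K) (hKN : K ≤ N) (hKodd : Odd K)
    {Y : Type*} [DecidableEq Y] (l l' : Y) (hll' : l ≠ l')
    (y : Fin N → Y) (hy : ∀ i : Fin N, y i = l ∨ y i = l')
    (s : Fin N → Fin M → ℝ)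
    (hs : Function.Injective fun p : Fin N × Fin M => s p.1 p.2)
    (e : Fin N → Fin M) (he : IsExtremeWorld s y l' e) :
    (∀ w : Fin N → Fin M, predicts s K y w l) ↔ predicts s K y e l := by
  constructor
  · exact fun h => h e
  · intro hpe w
    -- counting: for any world v, l-count + l'-count = K
    have hsplit : ∀ v : Fin N → Fin M,
        ((topK s K v).filter fun i => y i = l).card
        + ((topK s K v).filter fun i => y i = l').card = K := by
      intro v
      have h1 : ((topK s K v).filter fun i => y i = l').card
          = ((topK s K v).filter fun i => ¬ y i = l).card := by
        congr 1
        apply Finset.filter_congr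
        intro i _
        rcases hy i with h | h <;> simp [h, hll', Ne.symm hll']
      rw [h1, Finset.card_filter_add_card_filter_not, card_topK hs hKN]
    -- l'-count of w ≤ l'-count of e
    have hmain : ((topK s K w).filter fun i => y i = l').card
        ≤ ((topK s K e).filter fun i => y i = l').card := by
      by_cases hsub : ((topK s K w).filter fun i => y i = l') ⊆ topK s K e
      · apply Finset.card_le_card
        intro i hi
        rw [Finset.mem_filter] at hi ⊢
        exact ⟨hsub (Finset.mem_filter.2 hi), hi.2⟩
      · -- some i in A is outside topK e
        obtain ⟨i, hiA, hie⟩ := Finset.not_subset.1 hsub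
        rw [Finset.mem_filter] at hiA
        obtain ⟨hiw, hyi⟩ := hiA
        have hle : ((topK s K e).filter fun j => y j = l).card
            ≤ ((topK s K w).filter fun j => y j = l).card := by
          apply Finset.card_le_card
          intro j hj
          rw [Finset.mem_filter] at hj ⊢
          obtain ⟨hje, hyj⟩ := hj
          refine ⟨?_, hyj⟩
          -- s_e i < s_e j; s_w i ≤ s_e i; s_e j ≤ s_w j
          have h1 : s i (e i) < s j (e j) := topK_lt hje hie
          have h2 : s i (w i) ≤ s i (e i) := (he i).1 hyi (w i)
          have h3 : s j (e j) ≤ s j (w j) := by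
            have : y j ≠ l' := by rw [hyj]; exact hll'
            exact (he j).2 this (w j)
          exact topK_up hiw (le_trans h2 (le_trans h1.le h3))
        have hw := hsplit w
        have heq := hsplit e
        omega
    have hw := hsplit w
    have heq := hsplit e
    unfold predicts at hpe ⊢
    omega
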